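/- Let H and K be finite-dimensional complex Hilbert spaces with dim K ≥ 2, and let Φ be a superoperator (completely positive trace-nonincreasing map, given in operator-sum form Φ(ρ) = ∑_{i=1}^k E_i ρ E_i† with ∑_{i=1}^k E_i† E_i ≼ I) from operators on H to operators on K ⊗ K. Then the image of the set of density matrices on H under Φ cannot equal the set of separable density matrices on K ⊗ K. Equivalently: there is no superoperator Φ : H → K ⊗ K with dim H finite and dim K ≥ 2 such that every output Φ(ρ) of a density matrix ρ is a separable state, and every separable state on K ⊗ K arises as Φ(ρ) for some density matrix ρ. -/

import Mathlib

open Matrix Finset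
open scoped ComplexOrder Kronecker

set_option linter.unusedSectionVars false
set_option linter.unusedVariables false
set_option maxHeartbeats 1000000

/-- A bipartite density matrix on K ⊗ K (K = ℂ^d) is separable if it is a finite convex
combination of Kronecker products of density matrices on K. -/
def IsSeparableState {d : ℕ} (σ : Matrix (Fin d × Fin d) (Fin d × Fin d) ℂ) : Prop :=
  ∃ (m : ℕ) (p : Fin m → ℝ) (A B : Fin m → Matrix (Fin d) (Fin d) ℂ),
    (∀ i, 0 ≤ p i) ∧ (∑ i, p i = 1) ∧
    (∀ i, (A i).PosSemidef ∧ (A i).trace = 1) ∧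
    (∀ i, (B i).PosSemidef ∧ (B i).trace = 1) ∧
    σ = ∑ i, (p i : ℂ) • (A i ⊗ₖ B i)

namespace NPD
variable {m m' m'' : Type*} [Fintype m] [Fintype m'] [Fintype m''] [DecidableEq m] [DecidableEq m']

variable {m m' m'' : Type*} [Fintype m] [Fintype m'] [Fintype m''] [DecidableEq m] [DecidableEq m']

/-- outer product v w† -/
noncomputable def outer (v : m → ℂ) (w : m' → ℂ) : Matrix m m' ℂ :=
  Matrix.of fun i j => v i * (starRingEnd ℂ) (w j)

lemma outer_apply (v : m → ℂ) (w : m' → ℂ) (i j) : outer v w i j = v i * (starRingEnd ℂ) (w j) := rfl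

lemma outer_mulVec (v : m → ℂ) (w : m' → ℂ) (z : m' → ℂ) :
    outer v w *ᵥ z = (star w ⬝ᵥ z) • v := by
  funext i
  simp only [outer, mulVec, dotProduct, Matrix.of_apply, Pi.smul_apply, smul_eq_mul,
    Pi.star_apply, Finset.sum_mul]
  apply Finset.sum_congr rfl
  intro j _
  simp only [Pi.star_apply, RCLike.star_def]
  ring

lemma dot_outer (y : m → ℂ) (v : m → ℂ) (w : m' → ℂ) (z : m' → ℂ) :
    star y ⬝ᵥ (outer v w *ᵥ z) = (star y ⬝ᵥ v) * (star w ⬝ᵥ z) := by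
  rw [outer_mulVec, dotProduct_smul, smul_eq_mul]
  ring

lemma outer_conjTranspose (v : m → ℂ) (w : m' → ℂ) : (outer v w)ᴴ = outer w v := by
  ext i j; simp [outer, conjTranspose_apply]; ring

lemma outer_psd (v : m → ℂ) : (outer v v).PosSemidef := by
  rw [Matrix.posSemidef_iff_dotProduct_mulVec]
  constructor
  · exact outer_conjTranspose v v
  · intro x
    have : star x ⬝ᵥ (outer v v *ᵥ x) = (starRingEnd ℂ) (star v ⬝ᵥ x) * (star v ⬝ᵥ x) := by
      rw [dot_outer]
      congr 1
      simp [dotProduct, map_sum, mul_comm]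
    rw [this, Complex.conj_mul']
    positivity

lemma trace_outer (v : m → ℂ) : (outer v v).trace = star v ⬝ᵥ v := by
  simp [trace, Matrix.diag, outer, dotProduct, mul_comm]

lemma mul_outer_mul (A : Matrix m'' m ℂ) (B : Matrix m'' m' ℂ) (v : m → ℂ) (w : m' → ℂ) :
    A * outer v w * Bᴴ = outer (A *ᵥ v) (B *ᵥ w) := by
  ext i j
  simp only [outer, mul_apply, mulVec, dotProduct, conjTranspose_apply, Matrix.of_apply,
    Finset.sum_mul, map_sum]
  rw [Finset.sum_comm]
  apply Finset.sum_congr rfl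
  intro a _
  rw [Finset.mul_sum]
  apply Finset.sum_congr rfl
  intro b _
  simp [RCLike.star_def]
  ring

/-- matrix entry as quadratic form on basis vectors -/
lemma entry_eq_dot (X : Matrix m m' ℂ) (a : m) (b : m') :
    X a b = star (Pi.single a 1) ⬝ᵥ (X *ᵥ Pi.single b 1) := by
  simp [mulVec_single, dotProduct, Pi.single_apply, star_apply]

lemma dot_conj (X : Matrix m m' ℂ) (y : m → ℂ) (z : m' → ℂ) :
    star y ⬝ᵥ (X *ᵥ z) = (starRingEnd ℂ) (star z ⬝ᵥ (Xᴴ *ᵥ y)) := by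
  simp only [dotProduct, mulVec, conjTranspose_apply, Finset.mul_sum, map_sum]
  rw [Finset.sum_comm]
  apply Finset.sum_congr rfl
  intro a _
  apply Finset.sum_congr rfl
  intro b _
  simp only [Pi.star_apply, RCLike.star_def, _root_.map_mul, Complex.conj_conj]
  ring


open scoped MatrixOrder in
lemma psd_eq_conjT_mul_self {M : Matrix m m ℂ} (h : M.PosSemidef) :
    ∃ B : Matrix m m ℂ, M = Bᴴ * B := by
  obtain ⟨X, hX, -, hXX⟩ := CFC.exists_sqrt_of_isSelfAdjoint_of_quasispectrumRestricts
    h.isHermitian (QuasispectrumRestricts.nnreal_of_nonneg h.nonneg)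
  exact ⟨X, by rw [← hXX, ← Matrix.star_eq_conjTranspose, hX.star_eq]⟩

lemma psd_mulVec_eq_zero {M : Matrix m m ℂ} (hM : M.PosSemidef) {y : m → ℂ}
    (h : star y ⬝ᵥ (M *ᵥ y) = 0) : M *ᵥ y = 0 := by
  obtain ⟨B, rfl⟩ := psd_eq_conjT_mul_self hM
  have h2 : star (B *ᵥ y) ⬝ᵥ (B *ᵥ y) = 0 := by
    rw [← h, ← Matrix.mulVec_mulVec]
    rw [Matrix.star_mulVec, ← Matrix.dotProduct_mulVec]
  have h3 : B *ᵥ y = 0 := dotProduct_star_self_eq_zero.mp h2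
  rw [← Matrix.mulVec_mulVec, h3, Matrix.mulVec_zero]

lemma psd_smul_real {M : Matrix m m ℂ} (hM : M.PosSemidef) {c : ℝ} (hc : 0 ≤ c) :
    ((c : ℂ) • M).PosSemidef := by
  rw [Matrix.posSemidef_iff_dotProduct_mulVec]
  constructor
  · unfold Matrix.IsHermitian
    rw [Matrix.conjTranspose_smul, hM.1.eq]
    congr 1
    simp [Complex.conj_ofReal]
  · intro x
    rw [Matrix.smul_mulVec, dotProduct_smul, smul_eq_mul]
    have := hM.dotProduct_mulVec_nonneg x
    have hc' : (0:ℂ) ≤ (c : ℂ) := by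
      rw [Complex.nonneg_iff]; simp [hc]
    exact mul_nonneg hc' this

lemma nonneg_add_eq_zero {a b : ℂ} (ha : 0 ≤ a) (hb : 0 ≤ b) (hab : a + b = 0) : a = 0 := by
  have h1 : a ≤ a + b := le_add_of_nonneg_right hb
  rw [hab] at h1
  exact le_antisymm h1 ha

/-- key rank-one sandwich lemma -/
lemma sandwich (X : Matrix m m' ℂ) (p : m → ℂ) (q : m' → ℂ)
    (hp : star p ⬝ᵥ p = 1) (hq : star q ⬝ᵥ q = 1)
    (hL : ∀ y : m → ℂ, star p ⬝ᵥ y = 0 → ∀ z, star y ⬝ᵥ (X *ᵥ z) = 0)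
    (hR : ∀ z : m' → ℂ, star q ⬝ᵥ z = 0 → ∀ y, star y ⬝ᵥ (X *ᵥ z) = 0) :
    X = (star p ⬝ᵥ (X *ᵥ q)) • outer p q := by
  ext a b
  set lam := star p ⬝ᵥ (X *ᵥ q) with hlam
  set y : m → ℂ := Pi.single a 1 - (starRingEnd ℂ) (p a) • p with hy
  set z : m' → ℂ := Pi.single b 1 - (starRingEnd ℂ) (q b) • q with hz
  have hyp : star p ⬝ᵥ y = 0 := by
    rw [hy, dotProduct_sub, dotProduct_smul, dotProduct_single, hp]
    simp
  have hzq : star q ⬝ᵥ z = 0 := by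
    rw [hz, dotProduct_sub, dotProduct_smul, dotProduct_single, hq]
    simp
  have hsa : (Pi.single a 1 : m → ℂ) = (starRingEnd ℂ) (p a) • p + y := by rw [hy]; ring_nf
  have hsb : (Pi.single b 1 : m' → ℂ) = (starRingEnd ℂ) (q b) • q + z := by rw [hz]; ring_nf
  have expand : X a b = (starRingEnd ℂ) ((starRingEnd ℂ) (p a)) * ((starRingEnd ℂ) (q b)) * lam := by
    rw [entry_eq_dot X a b, hsa, hsb]
    rw [star_add, add_dotProduct, Matrix.mulVec_add, dotProduct_add, dotProduct_add]
    rw [star_smul, smul_dotProduct, Matrix.mulVec_smul, dotProduct_smul, dotProduct_smul]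
    simp only [hL y hyp, smul_dotProduct, smul_eq_mul, add_zero, mul_zero, smul_zero, zero_add]
    rw [hR z hzq p]
    simp only [RCLike.star_def, mul_zero, add_zero]
    rw [hlam]
    ring
  rw [expand, Matrix.smul_apply, outer_apply, Complex.conj_conj, smul_eq_mul]
  ring


section PT
/-- partial transpose on the second factor -/
def ptrans (σ : Matrix (Fin d × Fin d) (Fin d × Fin d) ℂ) : Matrix (Fin d × Fin d) (Fin d × Fin d) ℂ :=
  Matrix.of fun i k => σ (i.1, k.2) (k.1, i.2)

lemma ptrans_apply (σ : Matrix (Fin d × Fin d) (Fin d × Fin d) ℂ) (i k) :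
    ptrans σ i k = σ (i.1, k.2) (k.1, i.2) := rfl

lemma ptrans_add (σ τ : Matrix (Fin d × Fin d) (Fin d × Fin d) ℂ) :
    ptrans (σ + τ) = ptrans σ + ptrans τ := by ext i k; rfl

lemma ptrans_smul (c : ℂ) (σ : Matrix (Fin d × Fin d) (Fin d × Fin d) ℂ) :
    ptrans (c • σ) = c • ptrans σ := by ext i k; rfl

lemma ptrans_sum {ι : Type*} (s : Finset ι) (f : ι → Matrix (Fin d × Fin d) (Fin d × Fin d) ℂ) :
    ptrans (∑ i ∈ s, f i) = ∑ i ∈ s, ptrans (f i) := by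
  ext i k
  simp only [ptrans, Matrix.of_apply, Matrix.sum_apply]

lemma ptrans_kronecker (A B : Matrix (Fin d) (Fin d) ℂ) :
    ptrans (A ⊗ₖ B) = A ⊗ₖ Bᵀ := by
  ext ⟨i, j⟩ ⟨k, l⟩
  simp [ptrans, Matrix.kroneckerMap_apply, Matrix.transpose_apply]

lemma conjTranspose_kron (A B : Matrix (Fin d) (Fin d) ℂ) : (A ⊗ₖ B)ᴴ = Aᴴ ⊗ₖ Bᴴ := by
  ext ⟨i, j⟩ ⟨k, l⟩
  simp [conjTranspose_apply, Matrix.kroneckerMap_apply]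

lemma kron_psd {A B : Matrix (Fin d) (Fin d) ℂ} (hA : A.PosSemidef) (hB : B.PosSemidef) :
    (A ⊗ₖ B).PosSemidef := by
  obtain ⟨C, rfl⟩ := psd_eq_conjT_mul_self hA
  obtain ⟨D, rfl⟩ := psd_eq_conjT_mul_self hB
  have : (Cᴴ * C) ⊗ₖ (Dᴴ * D) = (C ⊗ₖ D)ᴴ * (C ⊗ₖ D) := by
    rw [conjTranspose_kron, ← Matrix.mul_kronecker_mul]
  rw [this]
  exact Matrix.posSemidef_conjTranspose_mul_self _

lemma psd_smul_real' {m : Type*} [Fintype m] {M : Matrix m m ℂ} (hM : M.PosSemidef) {c : ℝ}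
    (hc : 0 ≤ c) : ((c : ℂ) • M).PosSemidef := by
  rw [Matrix.posSemidef_iff_dotProduct_mulVec]
  constructor
  · unfold Matrix.IsHermitian
    rw [Matrix.conjTranspose_smul, hM.1.eq]
    congr 1
    simp
  · intro x
    rw [Matrix.smul_mulVec, dotProduct_smul, smul_eq_mul]
    exact mul_nonneg (by rw [Complex.nonneg_iff]; simp [hc]) (hM.dotProduct_mulVec_nonneg x)

lemma psd_sum {m : Type*} [Fintype m] {ι : Type*} (s : Finset ι) (f : ι → Matrix m m ℂ)
    (hf : ∀ i ∈ s, (f i).PosSemidef) : (∑ i ∈ s, f i).PosSemidef := by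
  classical
  induction s using Finset.induction with
  | empty => simp [Matrix.PosSemidef.zero]
  | insert a s hnot ih =>
    rw [Finset.sum_insert hnot]
    exact (hf _ (Finset.mem_insert_self _ _)).add
      (ih fun i hi => hf i (Finset.mem_insert_of_mem hi))

lemma sep_ptrans_psd {σ : Matrix (Fin d × Fin d) (Fin d × Fin d) ℂ}
    (h : IsSeparableState σ) :
    (ptrans σ).PosSemidef := by
  obtain ⟨m, p, A, B, hp, -, hA, hB, rfl⟩ := h
  rw [ptrans_sum]
  apply psd_sum
  intro i _
  rw [ptrans_smul, ptrans_kronecker]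
  exact psd_smul_real' (kron_psd (hA i).1 (hB i).1.transpose) (hp i)


end PT

lemma outer_smul_smul (c c' : ℂ) (v : m → ℂ) (w : m' → ℂ) :
    outer (c • v) (c' • w) = (c * (starRingEnd ℂ) c') • outer v w := by
  ext i j
  simp only [outer, Matrix.of_apply, Matrix.smul_apply, Pi.smul_apply, smul_eq_mul,
    _root_.map_mul]
  ring

lemma dot_star_comm (u z : m → ℂ) : star u ⬝ᵥ z = (starRingEnd ℂ) (star z ⬝ᵥ u) := by
  simp only [dotProduct, map_sum, Pi.star_apply, RCLike.star_def, _root_.map_mul,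
    Complex.conj_conj]
  exact Finset.sum_congr rfl fun i _ => mul_comm _ _

section Phi
variable {k : ℕ} {ι o : Type*} [Fintype ι] [Fintype o] [DecidableEq ι] [DecidableEq o]

/-- the superoperator -/
noncomputable def Phi (E : Fin k → Matrix o ι ℂ) (X : Matrix ι ι ℂ) : Matrix o o ℂ :=
  ∑ i, E i * X * (E i)ᴴ

variable (E : Fin k → Matrix o ι ℂ)

lemma Phi_add (X Y : Matrix ι ι ℂ) : Phi E (X + Y) = Phi E X + Phi E Y := by
  simp [Phi, Matrix.mul_add, Matrix.add_mul, Finset.sum_add_distrib]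

lemma Phi_smul (c : ℂ) (X : Matrix ι ι ℂ) : Phi E (c • X) = c • Phi E X := by
  simp [Phi, Matrix.mul_smul, Matrix.smul_mul, Finset.smul_sum]

lemma Phi_zero : Phi E 0 = 0 := by simp [Phi]

lemma Phi_sum {α : Type*} (s : Finset α) (f : α → Matrix ι ι ℂ) :
    Phi E (∑ a ∈ s, f a) = ∑ a ∈ s, Phi E (f a) := by
  classical
  induction s using Finset.induction with
  | empty => simp [Phi_zero]
  | insert a s hnot ih => rw [Finset.sum_insert hnot, Finset.sum_insert hnot, Phi_add, ih]

lemma Phi_outer (a b : ι → ℂ) :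
    Phi E (outer a b) = ∑ i, outer (E i *ᵥ a) (E i *ᵥ b) := by
  unfold Phi
  exact Finset.sum_congr rfl fun i _ => mul_outer_mul _ _ _ _

lemma Phi_outer_psd (a : ι → ℂ) : (Phi E (outer a a)).PosSemidef := by
  rw [Phi_outer]
  exact psd_sum _ _ fun i _ => outer_psd _

lemma Phi_conjT (a b : ι → ℂ) : Phi E (outer b a) = (Phi E (outer a b))ᴴ := by
  rw [Phi_outer, Phi_outer, Matrix.conjTranspose_sum]
  exact Finset.sum_congr rfl fun i _ => (outer_conjTranspose _ _).symm

lemma sum_mulVec' {α : Type*} (s : Finset α) (f : α → Matrix o m' ℂ) (z : m' → ℂ) :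
    (∑ a ∈ s, f a) *ᵥ z = ∑ a ∈ s, f a *ᵥ z := by
  funext i
  simp only [mulVec, dotProduct, Matrix.sum_apply, Finset.sum_apply, Finset.sum_mul]
  rw [Finset.sum_comm]

lemma dot_sum' {α : Type*} (s : Finset α) (u : o → ℂ) (f : α → (o → ℂ)) :
    u ⬝ᵥ (∑ a ∈ s, f a) = ∑ a ∈ s, u ⬝ᵥ f a := by
  simp only [dotProduct, Finset.sum_apply, Finset.mul_sum]
  rw [Finset.sum_comm]

lemma dot_Phi_outer (a b : ι → ℂ) (y z : o → ℂ) :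
    star y ⬝ᵥ (Phi E (outer a b) *ᵥ z)
      = ∑ i, (star y ⬝ᵥ (E i *ᵥ a)) * (starRingEnd ℂ) (star z ⬝ᵥ (E i *ᵥ b)) := by
  rw [Phi_outer, sum_mulVec', dot_sum']
  apply Finset.sum_congr rfl
  intro i _
  rw [dot_outer]
  congr 1
  exact dot_star_comm _ _

lemma sum_mul_conj_eq_zero {a : Fin k → ℂ} (h : ∑ i, a i * (starRingEnd ℂ) (a i) = 0) :
    ∀ i, a i = 0 := by
  intro i
  have h2 : ∑ j, (Complex.normSq (a j) : ℂ) = 0 := by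
    rw [← h]; exact Finset.sum_congr rfl fun j _ => (Complex.mul_conj _).symm
  have h3 : ∑ j, Complex.normSq (a j) = 0 := by
    have := h2
    push_cast at this
    exact_mod_cast this
  have h4 : Complex.normSq (a i) = 0 :=
    (Finset.sum_eq_zero_iff_of_nonneg fun j _ => Complex.normSq_nonneg _).mp h3 i (by simp)
  exact Complex.normSq_eq_zero.mp h4

/-- Cross terms have rank one. -/
lemma cross_rank_one {ψ φ : ι → ℂ} {p q : o → ℂ} (hp : star p ⬝ᵥ p = 1) (hq : star q ⬝ᵥ q = 1)
    (hψ : Phi E (outer ψ ψ) = outer p p) (hφ : Phi E (outer φ φ) = outer q q) :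
    Phi E (outer ψ φ) = (star p ⬝ᵥ (Phi E (outer ψ φ) *ᵥ q)) • outer p q := by
  apply sandwich _ p q hp hq
  · intro y hy z
    have hzero : ∀ i, star y ⬝ᵥ (E i *ᵥ ψ) = 0 := by
      apply sum_mul_conj_eq_zero
      have : ∑ i, (star y ⬝ᵥ (E i *ᵥ ψ)) * (starRingEnd ℂ) (star y ⬝ᵥ (E i *ᵥ ψ))
          = star y ⬝ᵥ (Phi E (outer ψ ψ) *ᵥ y) := (dot_Phi_outer E ψ ψ y y).symm
      rw [this, hψ, dot_outer]
      rw [hy, mul_zero]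
    rw [dot_Phi_outer]
    apply Finset.sum_eq_zero
    intro i _
    rw [hzero i, zero_mul]
  · intro z hz y
    have hzero : ∀ i, star z ⬝ᵥ (E i *ᵥ φ) = 0 := by
      apply sum_mul_conj_eq_zero
      have : ∑ i, (star z ⬝ᵥ (E i *ᵥ φ)) * (starRingEnd ℂ) (star z ⬝ᵥ (E i *ᵥ φ))
          = star z ⬝ᵥ (Phi E (outer φ φ) *ᵥ z) := (dot_Phi_outer E φ φ z z).symm
      rw [this, hφ, dot_outer]
      rw [hz, mul_zero]
    rw [dot_Phi_outer]
    apply Finset.sum_eq_zero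
    intro i _
    simp [hzero i]

lemma outer_rows (B : Matrix ι ι ℂ) :
    Bᴴ * B = ∑ j, outer (fun a => (starRingEnd ℂ) (B j a)) (fun a => (starRingEnd ℂ) (B j a)) := by
  ext a b
  simp only [Matrix.mul_apply, Matrix.conjTranspose_apply, Matrix.sum_apply, outer,
    Matrix.of_apply, RCLike.star_def, Complex.conj_conj]

lemma pure_preimage {ρ : Matrix ι ι ℂ} (hρ : ρ.PosSemidef) {p : o → ℂ}
    (hp : star p ⬝ᵥ p = 1) (hΦ : Phi E ρ = outer p p) :
    ∃ ψ : ι → ℂ, Phi E (outer ψ ψ) = outer p p := by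
  obtain ⟨B, rfl⟩ := psd_eq_conjT_mul_self hρ
  set w : ι → (ι → ℂ) := fun j a => (starRingEnd ℂ) (B j a) with hw
  have hsum : ∑ j, Phi E (outer (w j) (w j)) = outer p p := by
    rw [← Phi_sum, ← outer_rows, hΦ]
  -- each piece is a multiple of outer p p
  have key : ∀ j, Phi E (outer (w j) (w j))
      = (star p ⬝ᵥ (Phi E (outer (w j) (w j)) *ᵥ p)) • outer p p := by
    intro j
    set S := Phi E (outer (w j) (w j)) with hS
    have hSpsd : S.PosSemidef := Phi_outer_psd E (w j)
    have hker : ∀ y : o → ℂ, star p ⬝ᵥ y = 0 → S *ᵥ y = 0 := by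
      intro y hy
      apply psd_mulVec_eq_zero hSpsd
      have hrest : (∑ j' ∈ Finset.univ.erase j, Phi E (outer (w j') (w j'))).PosSemidef :=
        psd_sum _ _ fun j' _ => Phi_outer_psd E (w j')
      have hsplit : S + ∑ j' ∈ Finset.univ.erase j, Phi E (outer (w j') (w j'))
          = outer p p := by
        have h0 := Finset.add_sum_erase Finset.univ
          (fun j' => Phi E (outer (w j') (w j'))) (Finset.mem_univ j)
        rw [hS, h0, hsum]
      have htot : star y ⬝ᵥ (S *ᵥ y)
          + star y ⬝ᵥ ((∑ j' ∈ Finset.univ.erase j, Phi E (outer (w j') (w j'))) *ᵥ y) = 0 := by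
        rw [← dotProduct_add, ← Matrix.add_mulVec, hsplit, dot_outer, hy, mul_zero]
      exact nonneg_add_eq_zero (hSpsd.dotProduct_mulVec_nonneg y) (hrest.dotProduct_mulVec_nonneg y) htot
    apply sandwich S p p hp hp
    · intro y hy z
      rw [dot_conj, hSpsd.1.eq, hker y hy, dotProduct_zero, map_zero]
    · intro z hz y
      rw [hker z hz, dotProduct_zero]
  -- coefficients
  have hcsum : ∑ j, star p ⬝ᵥ (Phi E (outer (w j) (w j)) *ᵥ p) = 1 := by
    have h1 : star p ⬝ᵥ ((∑ j, Phi E (outer (w j) (w j))) *ᵥ p) = 1 := by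
      rw [hsum, dot_outer, hp, one_mul]
    rw [← h1, sum_mulVec', dot_sum']
  obtain ⟨j, hj⟩ : ∃ j, star p ⬝ᵥ (Phi E (outer (w j) (w j)) *ᵥ p) ≠ 0 := by
    by_contra hcon
    push_neg at hcon
    rw [Finset.sum_eq_zero (fun j _ => hcon j)] at hcsum
    exact zero_ne_one hcsum
  set cj : ℂ := star p ⬝ᵥ (Phi E (outer (w j) (w j)) *ᵥ p) with hcj
  have hcpos : 0 ≤ cj := (Phi_outer_psd E (w j)).dotProduct_mulVec_nonneg p
  have him : cj.im = 0 := ((Complex.nonneg_iff.mp hcpos).2).symm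
  have hre : cj = ((cj).re : ℂ) := Complex.ext rfl (by simp [him])
  have hrepos : 0 < cj.re := by
    rcases lt_or_eq_of_le (Complex.nonneg_iff.mp hcpos).1 with h | h
    · exact h
    · exfalso; apply hj; rw [hre, ← h]; simp
  refine ⟨(((Real.sqrt cj.re)⁻¹ : ℝ) : ℂ) • w j, ?_⟩
  rw [outer_smul_smul, Phi_smul, key j, ← hcj, smul_smul]
  have hone : (((Real.sqrt cj.re)⁻¹ : ℝ) : ℂ)
      * (starRingEnd ℂ) (((Real.sqrt cj.re)⁻¹ : ℝ) : ℂ) * cj = 1 := by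
    rw [Complex.conj_ofReal, hre, ← Complex.ofReal_mul, ← Complex.ofReal_mul]
    norm_cast
    rw [← Real.sqrt_inv, Real.mul_self_sqrt (by positivity)]
    field_simp
  rw [hone, one_smul]


end Phi

section Concrete
variable {d : ℕ} (i0 i1 : Fin d)

/-- elementary tensor of two vectors -/
noncomputable def tens (a b : Fin d → ℂ) : Fin d × Fin d → ℂ := fun ij => a ij.1 * b ij.2

/-- the family of vectors (1, t, 0, ..., 0) -/
noncomputable def uvec (t : ℝ) : Fin d → ℂ :=
  (Pi.single i0 1 : Fin d → ℂ) + (t : ℂ) • (Pi.single i1 1 : Fin d → ℂ)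

lemma uvec_at0 (h01 : i0 ≠ i1) (t : ℝ) : uvec i0 i1 t i0 = 1 := by
  simp only [uvec, Pi.add_apply, Pi.smul_apply, Pi.single_eq_same,
    Pi.single_eq_of_ne h01, smul_zero, add_zero]

lemma uvec_at1 (h01 : i0 ≠ i1) (t : ℝ) : uvec i0 i1 t i1 = (t : ℂ) := by
  simp only [uvec, Pi.add_apply, Pi.smul_apply, Pi.single_eq_same,
    Pi.single_eq_of_ne h01.symm, smul_eq_mul, mul_one, zero_add]

lemma star_uvec (h01 : i0 ≠ i1) (t : ℝ) : star (uvec i0 i1 t) = uvec i0 i1 t := by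
  funext i
  rcases eq_or_ne i i0 with h0 | h0
  · rw [Pi.star_apply, h0, uvec_at0 i0 i1 h01]; simp
  · rcases eq_or_ne i i1 with h1 | h1
    · rw [Pi.star_apply, h1, uvec_at1 i0 i1 h01]
      simp [RCLike.star_def, Complex.conj_ofReal]
    · simp [Pi.star_apply, uvec, Pi.single_eq_of_ne h0, Pi.single_eq_of_ne h1]

lemma uvec_dot (h01 : i0 ≠ i1) (s t : ℝ) :
    star (uvec i0 i1 s) ⬝ᵥ uvec i0 i1 t = ((1 + s * t : ℝ) : ℂ) := by
  rw [star_uvec i0 i1 h01]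
  unfold uvec
  rw [dotProduct_add, dotProduct_smul]
  rw [dotProduct_single, dotProduct_single]
  rw [Pi.add_apply, Pi.add_apply, Pi.smul_apply, Pi.smul_apply]
  rw [Pi.single_eq_same, Pi.single_eq_same, Pi.single_eq_of_ne h01, Pi.single_eq_of_ne h01.symm]
  simp only [smul_eq_mul]
  push_cast
  ring

lemma tens_dot (a b a' b' : Fin d → ℂ) :
    star (tens a b) ⬝ᵥ tens a' b' = (star a ⬝ᵥ a') * (star b ⬝ᵥ b') := by
  simp only [tens, dotProduct, Pi.star_apply, RCLike.star_def, _root_.map_mul]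
  rw [Fintype.sum_prod_type, Finset.sum_mul_sum]
  apply Finset.sum_congr rfl
  intro i _
  apply Finset.sum_congr rfl
  intro j _
  ring

lemma star_tens (a b : Fin d → ℂ) : star (tens a b) = tens (star a) (star b) := by
  funext ij
  simp [tens, Pi.star_apply]

lemma outer_tens_kron (a b a' b' : Fin d → ℂ) :
    outer (tens a b) (tens a' b') = outer a a' ⊗ₖ outer b b' := by
  ext ⟨i, j⟩ ⟨k, l⟩
  simp only [outer, tens, Matrix.of_apply, Matrix.kroneckerMap_apply, _root_.map_mul]
  ring

lemma ptrans_outer_tens (a b a' b' : Fin d → ℂ) :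
    ptrans (outer (tens a b) (tens a' b')) = outer (tens a (star b')) (tens a' (star b)) := by
  ext ⟨i, j⟩ ⟨k, l⟩
  simp only [ptrans, outer, tens, Matrix.of_apply, Pi.star_apply, RCLike.star_def,
    _root_.map_mul, Complex.conj_conj]
  ring

/-- the test vector x -/
noncomputable def xvec (s t : ℝ) : Fin d × Fin d → ℂ :=
  ((2 * s * t : ℝ) : ℂ) • (Pi.single (i0, i0) 1 : Fin d × Fin d → ℂ)
    + ((-(s + t) : ℝ) : ℂ) • (Pi.single (i0, i1) 1 : Fin d × Fin d → ℂ)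
    + ((-(s + t) : ℝ) : ℂ) • (Pi.single (i1, i0) 1 : Fin d × Fin d → ℂ)
    + ((2 : ℝ) : ℂ) • (Pi.single (i1, i1) 1 : Fin d × Fin d → ℂ)

lemma gcomp (h01 : i0 ≠ i1) (a b s t : ℝ) :
    star (tens (uvec i0 i1 a) (uvec i0 i1 b)) ⬝ᵥ xvec i0 i1 s t
      = ((2 * s * t - (a + b) * (s + t) + 2 * a * b : ℝ) : ℂ) := by
  rw [star_tens, star_uvec i0 i1 h01, star_uvec i0 i1 h01]
  unfold xvec
  rw [dotProduct_add, dotProduct_add, dotProduct_add, dotProduct_smul, dotProduct_smul,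
    dotProduct_smul, dotProduct_smul, dotProduct_single, dotProduct_single,
    dotProduct_single, dotProduct_single]
  have e00 : tens (uvec i0 i1 a) (uvec i0 i1 b) (i0, i0) = 1 := by
    simp [tens, uvec_at0 i0 i1 h01]
  have e01 : tens (uvec i0 i1 a) (uvec i0 i1 b) (i0, i1) = (b : ℂ) := by
    simp [tens, uvec_at0 i0 i1 h01, uvec_at1 i0 i1 h01]
  have e10 : tens (uvec i0 i1 a) (uvec i0 i1 b) (i1, i0) = (a : ℂ) := by
    simp [tens, uvec_at0 i0 i1 h01, uvec_at1 i0 i1 h01]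
  have e11 : tens (uvec i0 i1 a) (uvec i0 i1 b) (i1, i1) = ((a * b : ℝ) : ℂ) := by
    simp [tens, uvec_at1 i0 i1 h01]
  rw [e00, e01, e10, e11]
  simp only [smul_eq_mul]
  push_cast
  ring

lemma gcomp' (h01 : i0 ≠ i1) (a b s t : ℝ) :
    star (xvec i0 i1 s t) ⬝ᵥ tens (uvec i0 i1 a) (uvec i0 i1 b)
      = ((2 * s * t - (a + b) * (s + t) + 2 * a * b : ℝ) : ℂ) := by
  rw [dot_star_comm, gcomp i0 i1 h01, Complex.conj_ofReal]

end Concrete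

section Outer2
variable {m m' : Type*} [Fintype m] [Fintype m'] [DecidableEq m] [DecidableEq m']

lemma outer_add_left (a b : m → ℂ) (c : m' → ℂ) :
    outer (a + b) c = outer a c + outer b c := by
  ext i j; simp [outer]; ring

lemma outer_add_right (a : m → ℂ) (b c : m' → ℂ) :
    outer a (b + c) = outer a b + outer a c := by
  ext i j; simp [outer]; ring

lemma outer_smulL (c : ℂ) (a : m → ℂ) (b : m' → ℂ) :
    outer (c • a) b = c • outer a b := by
  ext i j; simp [outer]; ring

lemma outer_smulR (c : ℂ) (a : m → ℂ) (b : m' → ℂ) :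
    outer a (c • b) = (starRingEnd ℂ) c • outer a b := by
  ext i j; simp [outer, _root_.map_mul]; ring

lemma outer_zeroL (b : m' → ℂ) : outer (0 : m → ℂ) b = 0 := by
  ext i j; simp [outer]

lemma outer_sum_sum {ι : Type*} [Fintype ι] (c : ι → ℂ) (ψ : ι → (m → ℂ)) :
    outer (∑ t, c t • ψ t) (∑ t, c t • ψ t)
      = ∑ t, ∑ u, (c t * (starRingEnd ℂ) (c u)) • outer (ψ t) (ψ u) := by
  ext a b
  simp only [outer, Matrix.of_apply, Matrix.sum_apply, Matrix.smul_apply, Finset.sum_apply,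
    Pi.smul_apply, smul_eq_mul, map_sum, _root_.map_mul]
  rw [Finset.sum_mul_sum]
  apply Finset.sum_congr rfl
  intro t _
  apply Finset.sum_congr rfl
  intro u _
  ring

end Outer2

section Main
variable {n k d : ℕ} (i0 i1 : Fin d)

/-- normalized product vector -/
noncomputable def uhat (t : ℝ) : Fin d × Fin d → ℂ :=
  (((1 + t * t)⁻¹ : ℝ) : ℂ) • tens (uvec i0 i1 t) (uvec i0 i1 t)

lemma one_add_sq_pos (t : ℝ) : 0 < 1 + t * t := by nlinarith [mul_self_nonneg t]

lemma uhat_unit (h01 : i0 ≠ i1) (t : ℝ) : star (uhat i0 i1 t) ⬝ᵥ uhat i0 i1 t = 1 := by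
  unfold uhat
  rw [star_smul, smul_dotProduct, dotProduct_smul, tens_dot, uvec_dot i0 i1 h01]
  have hpos := one_add_sq_pos t
  have hpos' : (1 + t * t) ≠ 0 := ne_of_gt hpos
  simp only [RCLike.star_def, Complex.conj_ofReal, smul_eq_mul]
  rw [← Complex.ofReal_mul, ← Complex.ofReal_mul, ← Complex.ofReal_mul, ← Complex.ofReal_one]
  congr 1
  field_simp

/-- the cross dot product -/
noncomputable def realG (s t a b : ℝ) : ℝ := 2 * s * t - (a + b) * (s + t) + 2 * a * b

lemma ptrans_uhat_dot (h01 : i0 ≠ i1) (s t a b : ℝ) :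
    star (xvec i0 i1 s t) ⬝ᵥ (ptrans (outer (uhat i0 i1 a) (uhat i0 i1 b)) *ᵥ xvec i0 i1 s t)
      = (((1 + a * a)⁻¹ * (1 + b * b)⁻¹ * (realG s t a b * realG s t b a) : ℝ) : ℂ) := by
  unfold uhat
  rw [outer_smul_smul, Complex.conj_ofReal, ptrans_smul, Matrix.smul_mulVec,
    dotProduct_smul, ptrans_outer_tens, star_uvec i0 i1 h01, star_uvec i0 i1 h01,
    dot_outer, gcomp' i0 i1 h01, gcomp i0 i1 h01]
  simp only [smul_eq_mul]
  unfold realG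
  push_cast
  ring

lemma realG_diag (s t : ℝ) : realG s t s s = 0 ∧ realG s t t t = 0 := by
  constructor <;> (unfold realG; ring)

lemma realG_cross (s t : ℝ) : realG s t s t = -((s - t) ^ 2) := by
  unfold realG; ring

/-- main cross-vanishing lemma -/
lemma cross_zero (h01 : i0 ≠ i1) (E : Fin k → Matrix (Fin d × Fin d) (Fin n) ℂ)
    (hPT : ∀ v : Fin n → ℂ, (ptrans (Phi E (outer v v))).PosSemidef)
    {s t : ℝ} (hst : s ≠ t) {ψ φ : Fin n → ℂ}
    (hψ : Phi E (outer ψ ψ) = outer (uhat i0 i1 s) (uhat i0 i1 s))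
    (hφ : Phi E (outer φ φ) = outer (uhat i0 i1 t) (uhat i0 i1 t)) :
    Phi E (outer ψ φ) = 0 := by
  set ps := uhat i0 i1 s with hps
  set pt := uhat i0 i1 t with hpt
  have hrank := cross_rank_one E (uhat_unit i0 i1 h01 s) (uhat_unit i0 i1 h01 t) hψ hφ
  set lam := star ps ⬝ᵥ (Phi E (outer ψ φ) *ᵥ pt) with hlam
  by_cases hlz : lam = 0
  · rw [hrank, hlz, zero_smul]
  exfalso
  -- set up the unit phase
  set r := ‖lam‖ with hr
  have hrpos : 0 < r := by
    rw [hr]; exact norm_pos_iff.mpr hlz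
  set ω := -(lam / (r : ℂ)) with hω
  have hrne : ((r : ℝ) : ℂ) ≠ 0 := by
    simp only [ne_eq, Complex.ofReal_eq_zero]
    exact ne_of_gt hrpos
  have hω2 : (starRingEnd ℂ) ω * lam = ((-r : ℝ) : ℂ) := by
    rw [hω, map_neg, map_div₀, Complex.conj_ofReal]
    field_simp
    rw [mul_comm ((starRingEnd ℂ) lam) lam, Complex.mul_conj, ← Complex.sq_norm, ← hr]
    push_cast
    ring
  have hω3 : ω * (starRingEnd ℂ) lam = ((-r : ℝ) : ℂ) := by
    rw [hω]
    field_simp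
    rw [Complex.mul_conj, ← Complex.sq_norm, ← hr]
    push_cast
    ring
  have hω1 : ω * (starRingEnd ℂ) ω = 1 := by
    rw [hω, map_neg, map_div₀, Complex.conj_ofReal]
    field_simp
    rw [Complex.mul_conj, ← Complex.sq_norm, ← hr]
    push_cast
    ring
  -- expansion
  set v := ψ + ω • φ with hv
  have h1 : outer v v = outer ψ ψ + ((starRingEnd ℂ) ω • outer ψ φ + (ω • outer φ ψ
      + (ω * (starRingEnd ℂ) ω) • outer φ φ)) := by
    rw [hv, outer_add_left, outer_add_right, outer_add_right, outer_smulR, outer_smulL,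
      outer_smul_smul]
    abel
  have hconj : Phi E (outer φ ψ) = (starRingEnd ℂ) lam • outer pt ps := by
    rw [Phi_conjT E ψ φ, hrank, Matrix.conjTranspose_smul, outer_conjTranspose]
    rfl
  have hexp : Phi E (outer v v) = outer ps ps + ((starRingEnd ℂ) ω • (lam • outer ps pt)
      + (ω • ((starRingEnd ℂ) lam • outer pt ps) + outer pt pt)) := by
    rw [h1, Phi_add, Phi_add, Phi_add, Phi_smul, Phi_smul, Phi_smul, hψ, hφ, hrank, hconj,
      hω1, one_smul]
  -- evaluate the quadratic form
  have hq := (hPT v).dotProduct_mulVec_nonneg (xvec i0 i1 s t)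
  rw [hexp, hps, hpt] at hq
  simp only [ptrans_add, ptrans_smul, Matrix.add_mulVec, Matrix.smul_mulVec,
    dotProduct_add, dotProduct_smul, smul_eq_mul] at hq
  rw [ptrans_uhat_dot i0 i1 h01 s t s s, ptrans_uhat_dot i0 i1 h01 s t s t,
    ptrans_uhat_dot i0 i1 h01 s t t s, ptrans_uhat_dot i0 i1 h01 s t t t] at hq
  rw [(realG_diag s t).1, (realG_diag s t).2] at hq
  have hGG1 : realG s t s t * realG s t t s = (s - t) ^ 4 := by
    unfold realG; ring
  have hGG2 : realG s t t s * realG s t s t = (s - t) ^ 4 := by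
    unfold realG; ring
  rw [hGG1, hGG2, ← mul_assoc ((starRingEnd ℂ) ω) lam, ← mul_assoc ω ((starRingEnd ℂ) lam),
    hω2, hω3] at hq
  simp only [mul_zero, zero_mul, Complex.ofReal_zero, smul_eq_mul] at hq
  -- reduce to a real inequality
  have hkey : (0 : ℂ) ≤ ((-r * ((1 + s * s)⁻¹ * (1 + t * t)⁻¹ * (s - t) ^ 4)
      + (-r * ((1 + t * t)⁻¹ * (1 + s * s)⁻¹ * (s - t) ^ 4)) : ℝ) : ℂ) := by
    convert hq using 1
    push_cast
    ring
  rw [Complex.nonneg_iff] at hkey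
  have hre := hkey.1
  simp only [Complex.ofReal_re] at hre
  have hs4 : 0 < (s - t) ^ 4 := by
    have : s - t ≠ 0 := sub_ne_zero_of_ne hst
    positivity
  have hc1 : 0 < (1 + s * s)⁻¹ := inv_pos.mpr (one_add_sq_pos s)
  have hc2 : 0 < (1 + t * t)⁻¹ := inv_pos.mpr (one_add_sq_pos t)
  nlinarith [mul_pos (mul_pos hc1 hc2) hs4]

end Main

section Final
variable {n k d : ℕ}

lemma ptrans_zero {d : ℕ} : ptrans (0 : Matrix (Fin d × Fin d) (Fin d × Fin d) ℂ) = 0 := by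
  ext i j; rfl

lemma ptrans_phi_psd (E : Fin k → Matrix (Fin d × Fin d) (Fin n) ℂ)
    (himg : ∀ ρ : Matrix (Fin n) (Fin n) ℂ, ρ.PosSemidef → ρ.trace = 1 →
      IsSeparableState (Phi E ρ)) :
    ∀ v : Fin n → ℂ, (ptrans (Phi E (outer v v))).PosSemidef := by
  intro v
  by_cases hv : v = 0
  · rw [hv, outer_zeroL, Phi_zero, ptrans_zero]
    exact Matrix.PosSemidef.zero
  · set τc := star v ⬝ᵥ v with hτc
    have hτ0 : 0 ≤ τc := by
      have h1 := (Matrix.PosSemidef.one (n := Fin n) (R := ℂ)).dotProduct_mulVec_nonneg v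
      rwa [Matrix.one_mulVec] at h1
    have hτne : τc ≠ 0 := fun hc => hv (dotProduct_star_self_eq_zero.mp hc)
    have him : τc.im = 0 := ((Complex.nonneg_iff.mp hτ0).2).symm
    have hre : τc = ((τc.re : ℝ) : ℂ) := Complex.ext rfl (by simp [him])
    have hrepos : 0 < τc.re := by
      rcases lt_or_eq_of_le (Complex.nonneg_iff.mp hτ0).1 with h' | h'
      · exact h'
      · exfalso; apply hτne; rw [hre, ← h']; simp
    set ρ := (((τc.re)⁻¹ : ℝ) : ℂ) • outer v v with hρ
    have hρpsd : ρ.PosSemidef := psd_smul_real' (outer_psd v) (by positivity)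
    have hρtr : ρ.trace = 1 := by
      rw [hρ, Matrix.trace_smul, trace_outer, ← hτc, smul_eq_mul]
      nth_rewrite 2 [hre]
      rw [← Complex.ofReal_mul, inv_mul_cancel₀ (ne_of_gt hrepos), Complex.ofReal_one]
    have h1 := sep_ptrans_psd (himg ρ hρpsd hρtr)
    rw [hρ, Phi_smul, ptrans_smul] at h1
    have h2 := psd_smul_real' h1 (le_of_lt hrepos)
    have h3 : ((τc.re : ℝ) : ℂ) • (((τc.re)⁻¹ : ℝ) : ℂ) • ptrans (Phi E (outer v v))
        = ptrans (Phi E (outer v v)) := by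
      rw [smul_smul, ← Complex.ofReal_mul, mul_inv_cancel₀ (ne_of_gt hrepos),
        Complex.ofReal_one, one_smul]
    rwa [h3] at h2

lemma uhat_sep (i0 i1 : Fin d) (h01 : i0 ≠ i1) (t : ℝ) :
    IsSeparableState (outer (uhat i0 i1 t) (uhat i0 i1 t)) := by
  set c : ℝ := (1 + t * t)⁻¹ with hc
  have hcpos : 0 < c := inv_pos.mpr (one_add_sq_pos t)
  set A : Matrix (Fin d) (Fin d) ℂ := ((c : ℝ) : ℂ) • outer (uvec i0 i1 t) (uvec i0 i1 t)
    with hA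
  refine ⟨1, fun _ => 1, fun _ => A, fun _ => A, fun _ => zero_le_one, by simp, ?_, ?_, ?_⟩
  · intro _
    constructor
    · exact psd_smul_real' (outer_psd _) (le_of_lt hcpos)
    · rw [hA, Matrix.trace_smul, trace_outer, uvec_dot i0 i1 h01, smul_eq_mul,
        ← Complex.ofReal_mul, hc, inv_mul_cancel₀ (ne_of_gt (one_add_sq_pos t)),
        Complex.ofReal_one]
  · intro _
    constructor
    · exact psd_smul_real' (outer_psd _) (le_of_lt hcpos)
    · rw [hA, Matrix.trace_smul, trace_outer, uvec_dot i0 i1 h01, smul_eq_mul,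
        ← Complex.ofReal_mul, hc, inv_mul_cancel₀ (ne_of_gt (one_add_sq_pos t)),
        Complex.ofReal_one]
  · rw [Fin.sum_univ_one, Complex.ofReal_one, one_smul, hA, Matrix.smul_kronecker,
      Matrix.kronecker_smul, ← outer_tens_kron, smul_smul]
    unfold uhat
    rw [outer_smul_smul, Complex.conj_ofReal, ← hc]

end Final

end NPD

open NPD

/-- no perfect disentanglers: for dim K = d ≥ 2 and any finite-dimensional
input space H = ℂ^n, no superoperator Φ(ρ) = ∑ E_i ρ E_i† (completely positive,
trace-nonincreasing: ∑ E_i† E_i ≼ I) maps the set of density matrices on H *onto*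
exactly the set of separable states on K ⊗ K. -/
theorem no_perfect_disentangler {n d k : ℕ} (hd : 2 ≤ d)
    (E : Fin k → Matrix (Fin d × Fin d) (Fin n) ℂ)
    (hE : ((1 : Matrix (Fin n) (Fin n) ℂ) - ∑ i, (E i)ᴴ * E i).PosSemidef) :
    ¬ ((fun ρ => ∑ i, E i * ρ * (E i)ᴴ) ''
        {ρ : Matrix (Fin n) (Fin n) ℂ | ρ.PosSemidef ∧ ρ.trace = 1}
      = {σ : Matrix (Fin d × Fin d) (Fin d × Fin d) ℂ | IsSeparableState σ}) := by
  intro h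
  have himg : ∀ ρ : Matrix (Fin n) (Fin n) ℂ, ρ.PosSemidef → ρ.trace = 1 →
      IsSeparableState (Phi E ρ) := by
    intro ρ h1 h2
    have hmem : Phi E ρ ∈ (fun ρ => ∑ i, E i * ρ * (E i)ᴴ) ''
        {ρ : Matrix (Fin n) (Fin n) ℂ | ρ.PosSemidef ∧ ρ.trace = 1} :=
      ⟨ρ, ⟨h1, h2⟩, rfl⟩
    rw [h] at hmem
    exact hmem
  have hsurj : ∀ σ, IsSeparableState σ →
      ∃ ρ : Matrix (Fin n) (Fin n) ℂ, ρ.PosSemidef ∧ ρ.trace = 1 ∧ Phi E ρ = σ := by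
    intro σ hσ
    have hmem : σ ∈ (fun ρ => ∑ i, E i * ρ * (E i)ᴴ) ''
        {ρ : Matrix (Fin n) (Fin n) ℂ | ρ.PosSemidef ∧ ρ.trace = 1} := by
      rw [h]; exact hσ
    obtain ⟨ρ, hρ, he⟩ := hmem
    exact ⟨ρ, hρ.1, hρ.2, he⟩
  set i0 : Fin d := ⟨0, by omega⟩ with hi0
  set i1 : Fin d := ⟨1, by omega⟩ with hi1
  have h01 : i0 ≠ i1 := by
    rw [hi0, hi1]
    simp [Fin.ext_iff]
  have hPT := ptrans_phi_psd E himg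
  -- pure preimages of the product states
  have hpre : ∀ t : Fin (n + 1), ∃ ψ : Fin n → ℂ,
      Phi E (outer ψ ψ) = outer (uhat i0 i1 ((t : ℕ) : ℝ)) (uhat i0 i1 ((t : ℕ) : ℝ)) := by
    intro t
    obtain ⟨ρ, hρ1, hρ2, hρ3⟩ := hsurj _ (uhat_sep i0 i1 h01 ((t : ℕ) : ℝ))
    exact pure_preimage E hρ1 (uhat_unit i0 i1 h01 _) hρ3
  choose ψ hψ using hpre
  -- the n+1 vectors are linearly dependent
  have hdep : ¬ LinearIndependent ℂ ψ := by
    intro hli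
    have hcard := hli.fintype_card_le_finrank
    rw [Module.finrank_fin_fun, Fintype.card_fin] at hcard
    omega
  obtain ⟨g, hg0, j0, hj0⟩ := Fintype.not_linearIndependent_iff.mp hdep
  -- cross terms vanish
  have hcross : ∀ t u : Fin (n + 1), t ≠ u → Phi E (outer (ψ t) (ψ u)) = 0 := by
    intro t u htu
    apply cross_zero i0 i1 h01 E hPT _ (hψ t) (hψ u)
    intro hc
    apply htu
    have : (t : ℕ) = (u : ℕ) := Nat.cast_injective hc
    exact Fin.ext this
  -- expand zero
  have hzero : (0 : Matrix (Fin d × Fin d) (Fin d × Fin d) ℂ)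
      = ∑ t, (g t * (starRingEnd ℂ) (g t)) •
          outer (uhat i0 i1 ((t : ℕ) : ℝ)) (uhat i0 i1 ((t : ℕ) : ℝ)) := by
    have h0 : (0 : Matrix (Fin d × Fin d) (Fin d × Fin d) ℂ)
        = Phi E (outer (∑ t, g t • ψ t) (∑ t, g t • ψ t)) := by
      rw [hg0, outer_zeroL, Phi_zero]
    rw [h0, outer_sum_sum, Phi_sum]
    apply Finset.sum_congr rfl
    intro t _
    rw [Phi_sum]
    rw [Finset.sum_eq_single_of_mem t (Finset.mem_univ t)]
    · rw [Phi_smul, hψ t]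
    · intro u _ hu
      rw [Phi_smul, hcross t u (Ne.symm hu), smul_zero]
  -- take traces
  have htr := congrArg Matrix.trace hzero
  rw [Matrix.trace_zero, Matrix.trace_sum] at htr
  have htr2 : (0 : ℂ) = ∑ t, g t * (starRingEnd ℂ) (g t) := by
    rw [htr]
    apply Finset.sum_congr rfl
    intro t _
    rw [Matrix.trace_smul, trace_outer, uhat_unit i0 i1 h01, smul_eq_mul, mul_one]
  have := sum_mul_conj_eq_zero (htr2.symm) j0
  exact hj0 this
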